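/- arXiv:0809.0245 — 3 statements merged into one kernel-verified Lean document; each statement's English description precedes it below -/
import Mathlib

section
/- Let R be the root system of a finite-dimensional complex simple Lie algebra with a fixed set of positive roots R⁺ and highest root θ. If λ is a dominant integral weight with λ ≤ θ (i.e., θ - λ is a nonnegative integer combination of simple roots), then either λ = 0 or λ is a root. -/
open RealInnerProductSpace

structure RootSys (n : ℕ) where
  R : Set (EuclideanSpace ℝ (Fin n))
  finite : R.Finite
  zero_not_mem : (0 : EuclideanSpace ℝ (Fin n)) ∉ R
  spans : Submodule.span ℝ R = ⊤
  neg_mem : ∀ α ∈ R, -α ∈ R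
  reduced : ∀ α ∈ R, ∀ t : ℝ, t • α ∈ R → t = 1 ∨ t = -1
  reflect_mem : ∀ α ∈ R, ∀ β ∈ R, β - (2 * ⟪α, β⟫ / ⟪α, α⟫) • α ∈ R
  crystal : ∀ α ∈ R, ∀ β ∈ R, ∃ k : ℤ, 2 * ⟪α, β⟫ / ⟪α, α⟫ = (k : ℝ)
  irreducible : ∀ S ⊆ R, (∀ α ∈ S, ∀ β ∈ R \ S, ⟪α, β⟫ = 0) → S = ∅ ∨ S = R

structure BasedRootSys (n : ℕ) extends RootSys n where
  simple : Fin n → EuclideanSpace ℝ (Fin n)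
  simple_mem : ∀ i, simple i ∈ R
  simple_indep : LinearIndependent ℝ simple
  pos_or_neg : ∀ α ∈ R, α ∈ AddSubmonoid.closure (Set.range simple) ∨
      -α ∈ AddSubmonoid.closure (Set.range simple)

namespace BasedRootSys

variable {n : ℕ} (RS : BasedRootSys n)

/-- `Q⁺`, the nonnegative integer span of the simple roots. -/
noncomputable def Qplus : AddSubmonoid (EuclideanSpace ℝ (Fin n)) :=
  AddSubmonoid.closure (Set.range RS.simple)

/-- The dominance order. -/
def le (α β : EuclideanSpace ℝ (Fin n)) : Prop := β - α ∈ RS.Qplus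

/-- The positive roots. -/
def Rpos : Set (EuclideanSpace ℝ (Fin n)) := {α ∈ RS.R | α ∈ RS.Qplus}

end BasedRootSys

section Aux
variable {n : ℕ} (RS : BasedRootSys n)

lemma inner_self_pos_of_mem {α : EuclideanSpace ℝ (Fin n)} (hα : α ∈ RS.R) :
    0 < ⟪α, α⟫ := by
  rcases (real_inner_self_nonneg (x := α)).lt_or_eq with h | h
  · exact h
  · exact absurd (real_inner_self_nonpos.mp h.ge ▸ hα) RS.zero_not_mem

lemma qplus_mem {x : EuclideanSpace ℝ (Fin n)} (hx : x ∈ RS.Qplus) :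
    ∃ c : Fin n → ℕ, x = ∑ i, (c i : ℝ) • RS.simple i := by
  induction hx using AddSubmonoid.closure_induction with
  | mem y hy =>
    obtain ⟨i, rfl⟩ := hy
    exact ⟨fun j => if j = i then 1 else 0, by simp [Finset.sum_ite_eq']⟩
  | zero => exact ⟨0, by simp⟩
  | add y z _ _ hy hz =>
    obtain ⟨c, rfl⟩ := hy
    obtain ⟨d, rfl⟩ := hz
    exact ⟨c + d, by simp [add_smul, Finset.sum_add_distrib]⟩

/-- Root string lemma. -/
lemma sub_mem_of_inner_pos {n : ℕ} (RS : BasedRootSys n)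
    {α β : EuclideanSpace ℝ (Fin n)} (hα : α ∈ RS.R) (hβ : β ∈ RS.R)
    (hpos : 0 < ⟪α, β⟫) (hne : β ≠ α) : β - α ∈ RS.R := by
  obtain ⟨k, hk⟩ := RS.crystal α hα β hβ
  obtain ⟨l, hl⟩ := RS.crystal β hβ α hα
  have hαα := inner_self_pos_of_mem RS hα
  have hββ := inner_self_pos_of_mem RS hβ
  have hba : (0:ℝ) < ⟪β, α⟫ := by rw [real_inner_comm]; exact hpos
  have hk0 : (0:ℝ) < k := hk ▸ by positivity
  have hl0 : (0:ℝ) < l := hl ▸ by positivity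
  have hk1 : 1 ≤ k := by exact_mod_cast hk0
  have hl1 : 1 ≤ l := by exact_mod_cast hl0
  have hnot : k = 1 ∨ l = 1 := by
    by_contra hcon
    push_neg at hcon
    have hk2 : (2:ℝ) ≤ 2 * ⟪α, β⟫ / ⟪α, α⟫ := by
      rw [hk]; exact_mod_cast lt_of_le_of_ne hk1 (Ne.symm hcon.1)
    have hl2 : (2:ℝ) ≤ 2 * ⟪β, α⟫ / ⟪β, β⟫ := by
      rw [hl]; exact_mod_cast lt_of_le_of_ne hl1 (Ne.symm hcon.2)
    rw [le_div_iff₀ hαα] at hk2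
    rw [le_div_iff₀ hββ] at hl2
    have h1 : ⟪α, α⟫ ≤ ⟪α, β⟫ := by linarith
    have h2 : ⟪β, β⟫ ≤ ⟪α, β⟫ := by rw [real_inner_comm α β] at hl2; linarith
    have hcs := real_inner_mul_inner_self_le α β
    have heq : ⟪α, β⟫ * ⟪α, β⟫ = ⟪α, α⟫ * ⟪β, β⟫ := le_antisymm hcs (by nlinarith)
    have h1' : ⟪α, α⟫ = ‖α‖ ^ 2 := real_inner_self_eq_norm_sq α
    have h2' : ⟪β, β⟫ = ‖β‖ ^ 2 := real_inner_self_eq_norm_sq β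
    have hub := real_inner_le_norm α β
    have heqn : ⟪α, β⟫ = ‖α‖ * ‖β‖ := le_antisymm hub (by nlinarith)
    have hdep := inner_eq_norm_mul_iff_real.mp heqn
    have hαne : α ≠ 0 := fun h => RS.zero_not_mem (h ▸ hα)
    have hα0 : ‖α‖ ≠ 0 := norm_ne_zero_iff.mpr hαne
    have hβeq : β = (‖β‖ / ‖α‖) • α := by
      refine smul_right_injective _ hα0 ?_
      show ‖α‖ • β = ‖α‖ • (‖β‖ / ‖α‖) • α
      rw [smul_smul, show ‖α‖ * (‖β‖ / ‖α‖) = ‖β‖ from by field_simp]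
      exact hdep.symm
    have hred := RS.reduced α hα (‖β‖ / ‖α‖) (by rw [← hβeq]; exact hβ)
    have hβne : β ≠ 0 := fun h => RS.zero_not_mem (h ▸ hβ)
    have hβ0 : (0:ℝ) < ‖β‖ / ‖α‖ := by
      have h3 : ‖β‖ ≠ 0 := norm_ne_zero_iff.mpr hβne
      have h4 : ‖α‖ ≠ 0 := hα0
      positivity
    rcases hred with h | h
    · exact hne (by rw [hβeq, h, one_smul])
    · rw [h] at hβ0; norm_num at hβ0
  rcases hnot with h | h
  · have := RS.reflect_mem α hα β hβ
    rwa [hk, h, Int.cast_one, one_smul] at this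
  · have := RS.reflect_mem β hβ α hα
    rw [hl, h, Int.cast_one, one_smul] at this
    have := RS.neg_mem _ this
    rwa [neg_sub] at this

end Aux
lemma key {n : ℕ} (RS : BasedRootSys n) (lam : EuclideanSpace ℝ (Fin n))
    (hdom : ∀ i, 0 ≤ ⟪lam, RS.simple i⟫) :
    ∀ N : ℕ, ∀ c : Fin n → ℕ, (∑ i, c i) = N →
      ∀ μ : EuclideanSpace ℝ (Fin n), (μ = 0 ∨ μ ∈ RS.R) →
      μ - lam = ∑ i, (c i : ℝ) • RS.simple i →
      lam = 0 ∨ lam ∈ RS.R := by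
  intro N
  induction N using Nat.strong_induction_on with
  | _ N ih =>
  intro c hc μ hμ hsum
  rcases hμ with rfl | hμR
  · left
    have hlam : lam = -(∑ i, (c i : ℝ) • RS.simple i) := by
      rw [← hsum, neg_sub, sub_zero]
    have h1 : ⟪lam, lam⟫ ≤ 0 := by
      nth_rewrite 2 [hlam]
      rw [inner_neg_right, inner_sum]
      simp only [real_inner_smul_right]
      rw [neg_nonpos]
      exact Finset.sum_nonneg fun i _ => mul_nonneg (Nat.cast_nonneg _) (hdom i)
    exact real_inner_self_nonpos.mp h1
  · by_cases hν0 : (∑ i, (c i : ℝ) • RS.simple i) = 0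
    · right
      have : μ = lam := sub_eq_zero.mp (by rw [hsum, hν0])
      rwa [← this]
    · have hνν : 0 < ⟪∑ i, (c i : ℝ) • RS.simple i, ∑ i, (c i : ℝ) • RS.simple i⟫ := by
        rcases (real_inner_self_nonneg (x := ∑ i, (c i : ℝ) • RS.simple i)).lt_or_eq with h | h
        · exact h
        · exact absurd (real_inner_self_nonpos.mp h.ge) hν0
      have hsum2 : ⟪∑ i, (c i : ℝ) • RS.simple i, ∑ i, (c i : ℝ) • RS.simple i⟫ =
          ∑ i, (c i : ℝ) * ⟪RS.simple i, ∑ j, (c j : ℝ) • RS.simple j⟫ := by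
        rw [sum_inner]
        simp only [real_inner_smul_left]
      have hex : ∃ i, 0 < (c i : ℝ) * ⟪RS.simple i, ∑ j, (c j : ℝ) • RS.simple j⟫ := by
        by_contra h
        push_neg at h
        have := Finset.sum_nonpos (fun i (_ : i ∈ Finset.univ) => h i)
        rw [← hsum2] at this
        linarith
      obtain ⟨i, hi⟩ := hex
      have hci : 1 ≤ c i := by
        rcases Nat.eq_zero_or_pos (c i) with h | h
        · rw [h] at hi; norm_num at hi
        · exact h
      have hsν : 0 < ⟪RS.simple i, ∑ j, (c j : ℝ) • RS.simple j⟫ := by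
        by_contra h
        push_neg at h
        nlinarith [hi, (Nat.cast_nonneg (c i) : (0:ℝ) ≤ c i)]
      have hμi : 0 < ⟪RS.simple i, μ⟫ := by
        have hμeq : μ = lam + ∑ j, (c j : ℝ) • RS.simple j := by
          rw [← hsum]; abel
        rw [hμeq, inner_add_right]
        have h' : 0 ≤ ⟪RS.simple i, lam⟫ := by rw [real_inner_comm]; exact hdom i
        linarith
      have hμ' : μ - RS.simple i = 0 ∨ μ - RS.simple i ∈ RS.R := by
        by_cases he : μ = RS.simple i
        · left; rw [he, sub_self]
        · right; exact sub_mem_of_inner_pos RS (RS.simple_mem i) hμR hμi he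
      set c' : Fin n → ℕ := Function.update c i (c i - 1) with hc'
      have hdiff : ∑ j, (c j : ℝ) • RS.simple j - ∑ j, (c' j : ℝ) • RS.simple j
          = RS.simple i := by
        rw [← Finset.sum_sub_distrib]
        have hterm : ∀ j, (c j : ℝ) • RS.simple j - (c' j : ℝ) • RS.simple j
            = if j = i then RS.simple i else 0 := by
          intro j
          by_cases hj : j = i
          · subst hj
            simp only [hc', Function.update_self, if_pos rfl]
            rw [← sub_smul, Nat.cast_sub hci]
            push_cast
            rw [show (c j : ℝ) - ((c j : ℝ) - 1) = 1 by ring, one_smul]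
          · simp [hc', Function.update_of_ne hj, hj]
        rw [Finset.sum_congr rfl (fun j _ => hterm j)]
        simp
      have hsum' : (μ - RS.simple i) - lam = ∑ j, (c' j : ℝ) • RS.simple j := by
        rw [sub_right_comm, hsum, ← hdiff]; abel
      have hlt : (∑ j, c' j) < N := by
        rw [← hc]
        apply Finset.sum_lt_sum
        · intro j _
          by_cases hj : j = i
          · subst hj; simp only [hc', Function.update_self]; omega
          · simp [hc', Function.update_of_ne hj]
        · exact ⟨i, Finset.mem_univ i, by simp only [hc', Function.update_self]; omega⟩
      exact ih _ hlt c' rfl (μ - RS.simple i) hμ' hsum'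


/-- If `λ` is a dominant integral weight with `λ ≤ θ` (θ the highest root),
then either `λ = 0` or `λ` is a root. -/
theorem stmt_0 {n : ℕ} (RS : BasedRootSys n) (θ lam : EuclideanSpace ℝ (Fin n))
    (hθpos : θ ∈ RS.Rpos) (hθmax : ∀ α ∈ RS.R, RS.le α θ)
    (hdomint : ∀ i : Fin n,
      ∃ k : ℕ, 2 * ⟪lam, RS.simple i⟫ / ⟪RS.simple i, RS.simple i⟫ = (k : ℝ))
    (hle : RS.le lam θ) :
    lam = 0 ∨ lam ∈ RS.R := by
  have hdom : ∀ i, 0 ≤ ⟪lam, RS.simple i⟫ := by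
    intro i
    obtain ⟨k, hk⟩ := hdomint i
    have hpos := inner_self_pos_of_mem RS (RS.simple_mem i)
    have h2 : 2 * ⟪lam, RS.simple i⟫ = (k : ℝ) * ⟪RS.simple i, RS.simple i⟫ := by
      rw [div_eq_iff hpos.ne'] at hk
      linarith [hk]
    nlinarith [mul_nonneg (Nat.cast_nonneg k : (0:ℝ) ≤ k) hpos.le]
  obtain ⟨c, hcθ⟩ := qplus_mem RS hle
  exact key RS lam hdom (∑ i, c i) c rfl θ (Or.inr hθpos.1) hcθ
end

section
/- Let R⁺ be the positive roots of an irreducible root system with simple roots indexed by I, and let J ⊆ I. Let R⁺(J) denote the positive roots supported on J. If A ⊆ R⁺ is a J-antichain (i.e., A ∩ R⁺(J) = ∅, no two distinct elements of A are comparable in the dominance order, and α - α_j ∉ R for all α ∈ A and j ∈ J), then for every α ∈ A and every γ ∈ R⁺(J), we have α - γ ∉ R. -/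
open RealInnerProductSpace

namespace BasedRootSys

variable {n : ℕ} (RS : BasedRootSys n)

/-- `R(J)`, the roots supported on `J`. -/
noncomputable def RJ (J : Set (Fin n)) : Set (EuclideanSpace ℝ (Fin n)) :=
  {α ∈ RS.R | α ∈ AddSubgroup.closure (RS.simple '' J)}

/-- `R⁺(J)`, the positive roots supported on `J`. -/
noncomputable def RposJ (J : Set (Fin n)) : Set (EuclideanSpace ℝ (Fin n)) :=
  RS.RJ J ∩ RS.Rpos

/-- A `J`-antichain in `R⁺`. -/
def IsJAntichain (J : Set (Fin n)) (A : Set (EuclideanSpace ℝ (Fin n))) : Prop :=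
  A ⊆ RS.Rpos ∧ A ∩ RS.RposJ J = ∅ ∧
  (∀ α ∈ A, ∀ β ∈ A, α ≠ β → ¬ RS.le α β) ∧
  (∀ α ∈ A, ∀ j ∈ J, α - RS.simple j ∉ RS.R)

/-- The ideal `Φ(A)` generated by `A`. -/
def PhiOf (A : Set (EuclideanSpace ℝ (Fin n))) : Set (EuclideanSpace ℝ (Fin n)) :=
  {α ∈ RS.Rpos | ∃ β ∈ A, RS.le β α}

/-- A `J`-ideal in `R⁺`. -/
def IsJIdeal (J : Set (Fin n)) (Φ : Set (EuclideanSpace ℝ (Fin n))) : Prop :=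
  Φ ⊆ RS.Rpos ∧ Φ ∩ RS.RposJ J = ∅ ∧
  (∀ α ∈ Φ, ∀ β, (β ∈ RS.Rpos ∨ β ∈ RS.RJ J) → α + β ∈ RS.R → α + β ∈ Φ)

/-- The set of minimal elements of a subset of `R⁺` in the dominance order. -/
def minimals (Φ : Set (EuclideanSpace ℝ (Fin n))) : Set (EuclideanSpace ℝ (Fin n)) :=
  {α ∈ Φ | ∀ β ∈ Φ, RS.le β α → β = α}

end BasedRootSys

namespace BasedRootSys

variable {n : ℕ} (RS : BasedRootSys n)

/-- Key root-system lemma: if `⟪α, β⟫ > 0` and `α ≠ β` then `α - β` is a root. -/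
theorem sub_mem_of_inner_pos {α β : EuclideanSpace ℝ (Fin n)}
    (hα : α ∈ RS.R) (hβ : β ∈ RS.R) (hip : 0 < ⟪α, β⟫) (hne : α ≠ β) :
    α - β ∈ RS.R := by
  have hα0 : α ≠ 0 := fun h => RS.zero_not_mem (h ▸ hα)
  have hβ0 : β ≠ 0 := fun h => RS.zero_not_mem (h ▸ hβ)
  have ha : (0:ℝ) < ⟪α, α⟫ := by
    rw [real_inner_self_eq_norm_sq]; exact pow_pos (norm_pos_iff.mpr hα0) 2
  have hb : (0:ℝ) < ⟪β, β⟫ := by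
    rw [real_inner_self_eq_norm_sq]; exact pow_pos (norm_pos_iff.mpr hβ0) 2
  obtain ⟨k, hk⟩ := RS.crystal α hα β hβ
  obtain ⟨k', hk'⟩ := RS.crystal β hβ α hα
  have hba : ⟪β, α⟫ = ⟪α, β⟫ := real_inner_comm α β
  rw [hba] at hk'
  have hk1 : (1:ℤ) ≤ k := by
    have h0 : (0:ℤ) < k := by
      exact_mod_cast (show (0:ℝ) < (k:ℝ) by rw [← hk]; positivity)
    omega
  have hk'1 : (1:ℤ) ≤ k' := by
    have h0 : (0:ℤ) < k' := by
      exact_mod_cast (show (0:ℝ) < (k':ℝ) by rw [← hk']; positivity)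
    omega
  -- case k = 1 : β - α ∈ R via reflection in α
  rcases eq_or_lt_of_le hk1 with h1 | hk2
  · have := RS.reflect_mem α hα β hβ
    rw [hk, ← h1] at this
    simpa using RS.neg_mem _ this
  rcases eq_or_lt_of_le hk'1 with h1 | hk'2
  · have := RS.reflect_mem β hβ α hα
    rw [hba, hk', ← h1] at this
    simpa using this
  -- now k, k' ≥ 2; Cauchy–Schwarz forces k = k' = 2 and then α = β
  exfalso
  have hCS : ⟪α, β⟫ * ⟪α, β⟫ ≤ ⟪α, α⟫ * ⟪β, β⟫ := by
    have := abs_real_inner_le_norm α β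
    have h2 : ⟪α, β⟫ ≤ ‖α‖ * ‖β‖ := le_trans (le_abs_self _) this
    calc ⟪α, β⟫ * ⟪α, β⟫ ≤ (‖α‖ * ‖β‖) * (‖α‖ * ‖β‖) := by nlinarith
      _ = ⟪α, α⟫ * ⟪β, β⟫ := by
          rw [real_inner_self_eq_norm_mul_norm, real_inner_self_eq_norm_mul_norm]; ring
  have hkk : (k:ℝ) * (k':ℝ) ≤ 4 := by
    rw [← hk, ← hk']
    rw [div_mul_div_comm]
    rw [div_le_iff₀ (by positivity)]
    nlinarith
  have hk2' : (2:ℤ) ≤ k := hk2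
  have hk'2' : (2:ℤ) ≤ k' := hk'2
  have hkk4 : k * k' = 4 := le_antisymm (by exact_mod_cast hkk) (by nlinarith)
  have hke : k = 2 := by nlinarith
  have hk'e : k' = 2 := by nlinarith
  -- so ⟪α,β⟫ = ⟪α,α⟫ = ⟪β,β⟫
  have hpa : ⟪α, β⟫ = ⟪α, α⟫ := by
    have h2 : 2 * ⟪α, β⟫ = ((2:ℤ):ℝ) * ⟪α, α⟫ :=
      (div_eq_iff (ne_of_gt ha)).mp (by rw [hk, hke])
    push_cast at h2; linarith
  have hpb : ⟪α, β⟫ = ⟪β, β⟫ := by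
    have h2 : 2 * ⟪α, β⟫ = ((2:ℤ):ℝ) * ⟪β, β⟫ :=
      (div_eq_iff (ne_of_gt hb)).mp (by rw [hk', hk'e])
    push_cast at h2; linarith
  have hnorm : ‖α‖ = ‖β‖ := by
    have := hpa.symm.trans hpb
    rw [real_inner_self_eq_norm_mul_norm, real_inner_self_eq_norm_mul_norm] at this
    nlinarith [norm_nonneg α, norm_nonneg β]
  have heq : ⟪α, β⟫ = ‖α‖ * ‖β‖ := by
    rw [hpa, real_inner_self_eq_norm_mul_norm, hnorm]
  have := inner_eq_norm_mul_iff_real.mp heq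
  rw [hnorm] at this
  have hβn : ‖β‖ ≠ 0 := norm_ne_zero_iff.mpr hβ0
  exact hne (smul_right_injective _ hβn this)

/-- If `β, δ` are roots, `β + δ ≠ 0` and `β + δ ∉ R`, then `⟪β, δ⟫ ≥ 0`. -/
theorem inner_nonneg_of_add_not_mem {β δ : EuclideanSpace ℝ (Fin n)}
    (hβ : β ∈ RS.R) (hδ : δ ∈ RS.R) (hne : β + δ ≠ 0) (hnm : β + δ ∉ RS.R) :
    0 ≤ ⟪β, δ⟫ := by
  by_contra h
  push_neg at h
  have hip : 0 < ⟪β, -δ⟫ := by rw [inner_neg_right]; linarith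
  have hne' : β ≠ -δ := fun he => hne (by rw [he]; abel)
  have := RS.sub_mem_of_inner_pos hβ (RS.neg_mem δ hδ) hip hne'
  rw [sub_neg_eq_add] at this
  exact hnm this

section Coords

variable (B : Module.Basis (Fin n) ℝ (EuclideanSpace ℝ (Fin n)))

theorem coords_nonneg (hB : ⇑B = RS.simple) {x : EuclideanSpace ℝ (Fin n)}
    (hx : x ∈ RS.Qplus) (i : Fin n) :
    0 ≤ B.repr x i := by
  induction hx using AddSubmonoid.closure_induction with
  | mem y hy =>
      obtain ⟨j, rfl⟩ := hy
      rw [← hB, B.repr_self, Finsupp.single_apply]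
      split <;> norm_num
  | zero => simp
  | add y z _ _ hy hz => rw [map_add]; exact add_nonneg hy hz

theorem coords_J (hB : ⇑B = RS.simple) {J : Set (Fin n)} {x : EuclideanSpace ℝ (Fin n)}
    (hx : x ∈ AddSubgroup.closure (RS.simple '' J)) {i : Fin n} (hi : i ∉ J) :
    B.repr x i = 0 := by
  induction hx using AddSubgroup.closure_induction with
  | mem y hy =>
      obtain ⟨j, hj, rfl⟩ := hy
      rw [← hB, B.repr_self, Finsupp.single_apply]
      have hji : j ≠ i := fun h => hi (h ▸ hj)
      simp [hji]
  | zero => simp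
  | add y z _ _ hy hz => rw [map_add]; simp [hy, hz]
  | neg y _ hy => rw [map_neg]; simp [hy]

end Coords


theorem antichain_ind (J : Set (Fin n)) (A : Set (EuclideanSpace ℝ (Fin n)))
    (hA : RS.IsJAntichain J A) (B : Module.Basis (Fin n) ℝ (EuclideanSpace ℝ (Fin n)))
    (hB : ⇑B = RS.simple) :
    ∀ h : ℕ, ∀ α ∈ A, ∀ γ ∈ RS.RposJ J, (∑ i, B.repr γ i) ≤ (h : ℝ) → α - γ ∉ RS.R := by
  obtain ⟨hAp, hAJ, _hchain, hsimp⟩ := hA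
  have hnotJ : ∀ x ∈ A, x ∉ RS.RposJ J := by
    intro x hx hx'
    have hmem : x ∈ A ∩ RS.RposJ J := ⟨hx, hx'⟩
    rw [hAJ] at hmem
    exact hmem
  intro h
  induction h with
  | zero =>
    intro α hα γ hγ hht _hcon
    have hγR : γ ∈ RS.R := hγ.1.1
    have hγQ : γ ∈ RS.Qplus := hγ.2.2
    have h3 : ∀ j ∈ Finset.univ, (0:ℝ) ≤ B.repr γ j := fun j _ => RS.coords_nonneg B hB hγQ j
    have h2 : ∑ i, B.repr γ i ≤ 0 := by exact_mod_cast hht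
    have hsum0 : ∑ i, B.repr γ i = 0 := le_antisymm h2 (Finset.sum_nonneg h3)
    have hc : ∀ i, B.repr γ i = 0 := fun i =>
      (Finset.sum_eq_zero_iff_of_nonneg h3).mp hsum0 i (Finset.mem_univ i)
    have hγ0 : γ = 0 := by
      have hr : B.repr γ = 0 := Finsupp.ext fun i => hc i
      have := congrArg B.repr.symm hr
      simpa using this
    exact RS.zero_not_mem (hγ0 ▸ hγR)
  | succ h ih =>
    intro α hα γ hγ hht hcon
    obtain ⟨⟨hγR, hγJ⟩, _, hγQ⟩ := hγ
    have hγ0 : γ ≠ 0 := fun h0 => RS.zero_not_mem (h0 ▸ hγR)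
    have hpos : (0:ℝ) < ⟪γ, γ⟫ := by
      rw [real_inner_self_eq_norm_sq]; exact pow_pos (norm_pos_iff.mpr hγ0) 2
    have hexp : ∑ i, B.repr γ i * ⟪B i, γ⟫ = ⟪γ, γ⟫ := by
      have hterm : ∀ i, B.repr γ i * ⟪B i, γ⟫ = ⟪B.repr γ i • B i, γ⟫ := fun i =>
        (real_inner_smul_left _ _ _).symm
      rw [Finset.sum_congr rfl fun i _ => hterm i, ← sum_inner, B.sum_repr]
    have hexj : ∃ j, 0 < B.repr γ j * ⟪B j, γ⟫ := by
      by_contra hno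
      push_neg at hno
      have : ⟪γ, γ⟫ ≤ 0 := hexp ▸ Finset.sum_nonpos fun i _ => hno i
      linarith
    obtain ⟨j, hj0⟩ := hexj
    have hcj : 0 ≤ B.repr γ j := RS.coords_nonneg B hB hγQ j
    have hipj : 0 < ⟪B j, γ⟫ := by
      rcases lt_or_ge 0 (⟪B j, γ⟫) with hgt | hle
      · exact hgt
      · nlinarith
    have hjJ : j ∈ J := by
      by_contra hjn
      rw [RS.coords_J B hB hγJ hjn] at hj0
      simp at hj0
    have hsj : RS.simple j ∈ RS.R := RS.simple_mem j
    have hBj : B j = RS.simple j := congrFun hB j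
    have hipγj : 0 < ⟪γ, RS.simple j⟫ := by
      rw [real_inner_comm, ← hBj]; exact hipj
    have hsjP : RS.simple j ∈ RS.RposJ J :=
      ⟨⟨hsj, AddSubgroup.subset_closure ⟨j, hjJ, rfl⟩⟩, hsj,
        AddSubmonoid.subset_closure ⟨j, rfl⟩⟩
    by_cases hγs : γ = RS.simple j
    · exact hsimp α hα j hjJ (hγs ▸ hcon)
    · have hγ' : γ - RS.simple j ∈ RS.R := RS.sub_mem_of_inner_pos hγR hsj hipγj hγs
      have hγ'Q : γ - RS.simple j ∈ RS.Qplus := by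
        rcases RS.pos_or_neg _ hγ' with hq | hq
        · exact hq
        · exfalso
          rw [neg_sub] at hq
          have hcoords : ∀ i, i ≠ j → B.repr γ i = 0 := by
            intro i hij
            have h1 := RS.coords_nonneg B hB hq i
            have h2 := RS.coords_nonneg B hB hγQ i
            rw [map_sub, Finsupp.sub_apply, ← hBj, B.repr_self, Finsupp.single_apply,
              if_neg (fun hh => hij hh.symm)] at h1
            linarith
          have hrepr : B.repr γ = Finsupp.single j (B.repr γ j) := by
            ext i
            by_cases hij : i = j
            · subst hij; simp [Finsupp.single_apply]
            · rw [hcoords i hij, Finsupp.single_apply, if_neg (fun hh => hij hh.symm)]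
          have hγeq : γ = (B.repr γ j) • RS.simple j := by
            have hr2 : B.repr ((B.repr γ j) • B j) = Finsupp.single j (B.repr γ j) := by
              rw [map_smul, B.repr_self]
              ext i
              simp [Finsupp.single_apply]
            have hinj := B.repr.injective (hrepr.trans hr2.symm)
            rw [hBj] at hinj
            exact hinj
          rcases RS.reduced _ hsj _ (hγeq ▸ hγR) with h1 | h1
          · exact hγs (by rw [hγeq, h1, one_smul])
          · rw [h1] at hcj; linarith
      have hγ'P : γ - RS.simple j ∈ RS.RposJ J :=
        ⟨⟨hγ', AddSubgroup.sub_mem _ hγJ (AddSubgroup.subset_closure ⟨j, hjJ, rfl⟩)⟩, hγ', hγ'Q⟩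
      have hht' : (∑ i, B.repr (γ - RS.simple j) i) ≤ (h : ℝ) := by
        have hs : ∑ i, B.repr (RS.simple j) i = 1 := by
          rw [← hBj, B.repr_self]
          simp [Finsupp.single_apply]
        have hsplit : ∑ i, B.repr (γ - RS.simple j) i
            = (∑ i, B.repr γ i) - ∑ i, B.repr (RS.simple j) i := by
          rw [← Finset.sum_sub_distrib]
          refine Finset.sum_congr rfl fun i _ => ?_
          rw [map_sub, Finsupp.sub_apply]
        rw [hsplit, hs]
        push_cast at hht ⊢
        linarith
      have hIH : α - (γ - RS.simple j) ∉ RS.R := ih α hα _ hγ'P hht'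
      have hsum_ne : (α - γ) + RS.simple j ≠ 0 := by
        intro h0
        have h0' : α - (γ - RS.simple j) = 0 := by rw [← h0]; abel
        exact hnotJ α hα ((sub_eq_zero.mp h0') ▸ hγ'P)
      have hnm : (α - γ) + RS.simple j ∉ RS.R := by
        intro hmem
        apply hIH
        have he : α - (γ - RS.simple j) = (α - γ) + RS.simple j := by abel
        rw [he]; exact hmem
      have h1 : 0 ≤ ⟪α - γ, RS.simple j⟫ := RS.inner_nonneg_of_add_not_mem hcon hsj hsum_ne hnm
      have h2 : ⟪α, RS.simple j⟫ ≤ 0 := by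
        by_contra hc2
        push_neg at hc2
        have hαns : α ≠ RS.simple j := fun he => hnotJ α hα (he ▸ hsjP)
        exact hsimp α hα j hjJ (RS.sub_mem_of_inner_pos (hAp hα).1 hsj hc2 hαns)
      have h3 : ⟪γ, RS.simple j⟫ = ⟪α, RS.simple j⟫ - ⟪α - γ, RS.simple j⟫ := by
        rw [← inner_sub_left, sub_sub_cancel]
      linarith

end BasedRootSys

/-- If `A` is a `J`-antichain then `α - γ ∉ R` for all `α ∈ A`, `γ ∈ R⁺(J)`. -/
theorem stmt_3 {n : ℕ} (RS : BasedRootSys n) (J : Set (Fin n))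
    (A : Set (EuclideanSpace ℝ (Fin n))) (hA : RS.IsJAntichain J A) :
    ∀ α ∈ A, ∀ γ ∈ RS.RposJ J, α - γ ∉ RS.R := by
  intro α hα γ hγ
  rcases Nat.eq_zero_or_pos n with hn | hn
  · intro _
    subst hn
    have hγ0 : γ = 0 := PiLp.ext fun i => Fin.elim0 i
    exact RS.zero_not_mem (hγ0 ▸ hγ.1.1)
  · haveI : Nonempty (Fin n) := ⟨⟨0, hn⟩⟩
    have hcard : Fintype.card (Fin n) = Module.finrank ℝ (EuclideanSpace ℝ (Fin n)) := by
      simp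
    let B := basisOfLinearIndependentOfCardEqFinrank RS.simple_indep hcard
    have hB : ⇑B = RS.simple := coe_basisOfLinearIndependentOfCardEqFinrank _ _
    exact RS.antichain_ind J A hA B hB ⌈∑ i, B.repr γ i⌉₊ α hα γ hγ (Nat.le_ceil _)
end

section
/- Let A be an antichain in R⁺ and Φ(A) the ideal it generates. Then Φ(A) has nilpotence k (i.e., no sum of k+1 not-necessarily-distinct elements of Φ(A) is a root) if and only if no sum of k+1 not-necessarily-distinct elements of A is ≤ θ, where θ is the highest root. -/
open RealInnerProductSpace

namespace StmtAux

variable {n : ℕ} (RS : BasedRootSys n)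

lemma root_ne_zero {α : EuclideanSpace ℝ (Fin n)} (h : α ∈ RS.R) : α ≠ 0 :=
  fun e => RS.zero_not_mem (e ▸ h)

lemma inner_self_pos {α : EuclideanSpace ℝ (Fin n)} (h : α ∈ RS.R) : 0 < ⟪α, α⟫ := by
  rw [real_inner_self_eq_norm_sq]
  exact pow_pos (norm_pos_iff.2 (root_ne_zero RS h)) 2

lemma mem_Qplus_exists {x : EuclideanSpace ℝ (Fin n)} (hx : x ∈ RS.Qplus) :
    ∃ c : Fin n → ℕ, x = ∑ i, (c i : ℝ) • RS.simple i := by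
  induction hx using AddSubmonoid.closure_induction with
  | mem y hy =>
      obtain ⟨i, rfl⟩ := hy
      refine ⟨fun j => if j = i then 1 else 0, ?_⟩
      simp [apply_ite (fun m : ℕ => (m : ℝ)), ite_smul]
  | zero => exact ⟨0, by simp⟩
  | add x y hx hy ihx ihy =>
      obtain ⟨c, rfl⟩ := ihx
      obtain ⟨d, rfl⟩ := ihy
      refine ⟨c + d, ?_⟩
      rw [← Finset.sum_add_distrib]
      refine Finset.sum_congr rfl fun i _ => ?_
      push_cast [Pi.add_apply]
      module

lemma qplus_antisymm {x : EuclideanSpace ℝ (Fin n)} (hx : x ∈ RS.Qplus)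
    (hx' : -x ∈ RS.Qplus) : x = 0 := by
  obtain ⟨c, hc⟩ := mem_Qplus_exists RS hx
  obtain ⟨d, hd⟩ := mem_Qplus_exists RS hx'
  have hsum : ∑ i, ((c i + d i : ℕ) : ℝ) • RS.simple i = 0 := by
    have h0 : (∑ i, (c i : ℝ) • RS.simple i) + (∑ i, (d i : ℝ) • RS.simple i) = 0 := by
      rw [← hc, ← hd]; abel
    rw [← Finset.sum_add_distrib] at h0
    rw [← h0]
    refine Finset.sum_congr rfl fun i _ => ?_
    push_cast
    module
  have := Fintype.linearIndependent_iff.1 RS.simple_indep _ hsum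
  have hz : ∀ i, c i = 0 := by
    intro i
    have h0 := this i
    push_cast at h0
    have h1 : (c i : ℝ) = 0 := by
      have hc0 : (0:ℝ) ≤ (c i : ℝ) := Nat.cast_nonneg _
      have hd0 : (0:ℝ) ≤ (d i : ℝ) := Nat.cast_nonneg _
      linarith
    exact_mod_cast h1
  rw [hc]
  simp [hz]

lemma qplus_add_eq_zero {x y : EuclideanSpace ℝ (Fin n)} (hx : x ∈ RS.Qplus)
    (hy : y ∈ RS.Qplus) (h : x + y = 0) : x = 0 :=
  qplus_antisymm RS hx (by rw [neg_eq_of_add_eq_zero_right h]; exact hy)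

/-- If two roots have positive inner product, they are equal or their difference is a root. -/
lemma sub_mem_of_inner_pos {α β : EuclideanSpace ℝ (Fin n)} (hα : α ∈ RS.R) (hβ : β ∈ RS.R)
    (h : 0 < ⟪α, β⟫) : α = β ∨ α - β ∈ RS.R := by
  obtain ⟨k, hk⟩ := RS.crystal β hβ α hα
  obtain ⟨k', hk'⟩ := RS.crystal α hα β hβ
  have hαα := inner_self_pos RS hα
  have hββ := inner_self_pos RS hβ
  have hβα : 0 < ⟪β, α⟫ := by rwa [real_inner_comm]
  have hk1 : 1 ≤ k := by
    have : (0 : ℝ) < k := by rw [← hk]; positivity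
    exact_mod_cast this
  have hk'1 : 1 ≤ k' := by
    have : (0 : ℝ) < k' := by rw [← hk']; positivity
    exact_mod_cast this
  rcases eq_or_lt_of_le hk1 with hk1' | hk2
  · -- k = 1 : α - β ∈ R via reflection of α in β
    right
    have := RS.reflect_mem β hβ α hα
    rw [hk, ← hk1'] at this
    simpa using this
  rcases eq_or_lt_of_le hk'1 with hk1'' | hk'2
  · right
    have := RS.reflect_mem α hα β hβ
    rw [hk', ← hk1''] at this
    have := RS.neg_mem _ this
    simpa using this
  -- k, k' ≥ 2 : equality in Cauchy-Schwarz
  left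
  have hcs := real_inner_mul_inner_self_le α β
  have hαβ' : ⟪α, β⟫ = (k' : ℝ) * ⟪α, α⟫ / 2 := by
    rw [div_eq_iff (ne_of_gt hαα)] at hk'
    linarith
  have hβα' : ⟪β, α⟫ = (k : ℝ) * ⟪β, β⟫ / 2 := by
    rw [div_eq_iff (ne_of_gt hββ)] at hk
    linarith
  have hk2' : (2 : ℝ) ≤ k := by exact_mod_cast hk2
  have hk'2' : (2 : ℝ) ≤ k' := by exact_mod_cast hk'2
  have h1 : ⟪α, β⟫ = (k : ℝ) * ⟪β, β⟫ / 2 := by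
    have hcomm := real_inner_comm α β
    linarith
  have hip : 4 * (⟪α, β⟫ * ⟪α, β⟫) = (k : ℝ) * (k' : ℝ) * (⟪α, α⟫ * ⟪β, β⟫) := by
    linear_combination (2 * (k : ℝ) * ⟪β, β⟫) * hαβ' + (4 * ⟪α, β⟫) * h1
  have hkk : (4 : ℝ) ≤ (k : ℝ) * (k' : ℝ) := by nlinarith
  have hge : ⟪α, α⟫ * ⟪β, β⟫ ≤ ⟪α, β⟫ * ⟪α, β⟫ := by nlinarith [mul_pos hαα hββ]
  have heq : ⟪α, β⟫ * ⟪α, β⟫ = ⟪α, α⟫ * ⟪β, β⟫ := le_antisymm hcs hge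
  set t : ℝ := ⟪α, β⟫ / ⟪α, α⟫ with ht
  have htα : t * ⟪α, α⟫ = ⟪α, β⟫ := div_mul_cancel₀ _ (ne_of_gt hαα)
  have hexp : ⟪β - t • α, β - t • α⟫ = 0 := by
    have hrw : ⟪β - t • α, β - t • α⟫ =
        ⟪β, β⟫ - 2 * t * ⟪α, β⟫ + t ^ 2 * ⟪α, α⟫ := by
      simp only [inner_sub_left, inner_sub_right, real_inner_smul_left, real_inner_smul_right,
        real_inner_comm β α]
      ring
    have h3 : (⟪β, β⟫ - 2 * t * ⟪α, β⟫ + t ^ 2 * ⟪α, α⟫) * ⟪α, α⟫ = 0 := by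
      linear_combination (-1 : ℝ) * heq + (t * ⟪α, α⟫ - ⟪α, β⟫) * htα
    rcases mul_eq_zero.1 h3 with h4 | h4
    · rw [hrw]; exact h4
    · exact absurd h4 (ne_of_gt hαα)
  have hβt : β = t • α := sub_eq_zero.1 (inner_self_eq_zero.1 hexp)
  have := RS.reduced α hα t (by rwa [← hβt])
  rcases this with h5 | h5
  · rw [hβt, h5, one_smul]
  · exfalso
    rw [hβt, h5] at h
    rw [real_inner_smul_right] at h
    linarith

lemma add_root_of_inner_neg {α β : EuclideanSpace ℝ (Fin n)} (hα : α ∈ RS.R) (hβ : β ∈ RS.R)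
    (h : ⟪α, β⟫ < 0) (hne : α + β ≠ 0) : α + β ∈ RS.R := by
  have hnb := RS.neg_mem β hβ
  have hpos : 0 < ⟪α, -β⟫ := by rw [inner_neg_right]; linarith
  rcases sub_mem_of_inner_pos RS hα hnb hpos with h1 | h1
  · exact absurd (by rw [h1]; abel) hne
  · rwa [sub_neg_eq_add] at h1

lemma simple_mem_Rpos (i : Fin n) : RS.simple i ∈ RS.Rpos :=
  ⟨RS.simple_mem i, AddSubmonoid.subset_closure ⟨i, rfl⟩⟩

lemma exists_multiset_of_mem_Qplus {x : EuclideanSpace ℝ (Fin n)} (hx : x ∈ RS.Qplus) :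
    ∃ s : Multiset (EuclideanSpace ℝ (Fin n)), (∀ y ∈ s, y ∈ RS.Rpos) ∧ s.sum = x := by
  induction hx using AddSubmonoid.closure_induction with
  | mem y hy =>
      obtain ⟨i, rfl⟩ := hy
      exact ⟨{RS.simple i}, by simpa using simple_mem_Rpos RS i, by simp⟩
  | zero => exact ⟨0, by simp, rfl⟩
  | add x y hx hy ihx ihy =>
      obtain ⟨s, hs, rfl⟩ := ihx
      obtain ⟨t, ht, rfl⟩ := ihy
      refine ⟨s + t, fun y hy => ?_, by simp⟩
      rcases Multiset.mem_add.1 hy with h | h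
      exacts [hs y h, ht y h]

lemma inner_multiset_sum (u : Multiset (EuclideanSpace ℝ (Fin n))) (x : EuclideanSpace ℝ (Fin n)) :
    ⟪x, u.sum⟫ = (u.map fun y => ⟪x, y⟫).sum := by
  induction u using Multiset.induction_on with
  | empty => simp
  | cons a u ih => simp [inner_add_right, ih]

lemma main_lemma (k : ℕ) (a : Fin (k+1) → EuclideanSpace ℝ (Fin n)) :
    ∀ N (s : Multiset (EuclideanSpace ℝ (Fin n))), s.card ≤ N →
    ∀ (γ : EuclideanSpace ℝ (Fin n)) (β : Fin (k+1) → EuclideanSpace ℝ (Fin n)),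
    γ ∈ RS.R → (∀ y ∈ s, y ∈ RS.Rpos) → (∀ i, β i ∈ RS.Rpos) →
    (∀ i, β i - a i ∈ RS.Qplus) → γ = (∑ i, β i) + s.sum →
    ∃ g : Fin (k+1) → EuclideanSpace ℝ (Fin n),
      (∀ i, g i ∈ RS.Rpos) ∧ (∀ i, g i - a i ∈ RS.Qplus) ∧ (∑ i, g i) ∈ RS.R := by
  intro N
  induction N with
  | zero =>
      intro s hcard γ β hγ hs hβ hβa hsum
      have hs0 : s = 0 := Multiset.card_eq_zero.1 (Nat.le_zero.1 hcard)
      subst hs0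
      exact ⟨β, hβ, hβa, by rw [Multiset.sum_zero, add_zero] at hsum; rwa [← hsum]⟩
  | succ N IH =>
      intro s hcard γ β hγ hs hβ hβa hsum
      classical
      rcases Multiset.empty_or_exists_mem s with rfl | ⟨δ, hδs⟩
      · exact ⟨β, hβ, hβa, by rw [Multiset.sum_zero, add_zero] at hsum; rwa [← hsum]⟩
      obtain ⟨t, rfl⟩ := Multiset.exists_cons_of_mem hδs
      have hδ : δ ∈ RS.Rpos := hs δ (Multiset.mem_cons_self δ t)
      have ht : ∀ y ∈ t, y ∈ RS.Rpos := fun y hy => hs y (Multiset.mem_cons_of_mem hy)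
      have htcard : t.card ≤ N := by
        have h := hcard; rw [Multiset.card_cons] at h; omega
      have hsums : (δ ::ₘ t).sum = δ + t.sum := Multiset.sum_cons δ t
      have htQ : t.sum ∈ RS.Qplus :=
        AddSubmonoid.multiset_sum_mem _ t (fun y hy => (ht y hy).2)
      by_cases hpos : 0 < ⟪γ, δ⟫
      · rcases sub_mem_of_inner_pos RS hγ hδ.1 hpos with h1 | h1
        · -- γ = δ is impossible
          exfalso
          have h2 : δ + ((∑ i, β i) + t.sum) = δ + 0 := by
            rw [add_zero]
            rw [hsums] at hsum
            calc δ + ((∑ i, β i) + t.sum) = (∑ i, β i) + (δ + t.sum) := by abel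
              _ = γ := hsum.symm
              _ = δ := h1
          have h0 : (∑ i, β i) + t.sum = 0 := add_left_cancel h2
          rw [Fin.sum_univ_succ] at h0
          have h0' : β 0 + ((∑ i : Fin k, β i.succ) + t.sum) = 0 := by
            rw [← h0]; abel
          have hmemQ : (∑ i : Fin k, β i.succ) + t.sum ∈ RS.Qplus :=
            AddSubmonoid.add_mem _ (AddSubmonoid.sum_mem _ fun i _ => (hβ i.succ).2) htQ
          have : β 0 = 0 := qplus_add_eq_zero RS (hβ 0).2 hmemQ h0'
          exact root_ne_zero RS (hβ 0).1 this
        · refine IH t htcard (γ - δ) β h1 ht hβ hβa ?_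
          rw [hsums] at hsum
          rw [hsum]; abel
      · have hle : ⟪δ, γ⟫ ≤ 0 := by rw [real_inner_comm]; exact not_lt.1 hpos
        have hδδ := inner_self_pos RS hδ.1
        have hexpand : ⟪δ, γ⟫ =
            (∑ i, ⟪δ, β i⟫) + (⟪δ, δ⟫ + (t.map fun y => ⟪δ, y⟫).sum) := by
          rw [hsum, hsums, inner_add_right, inner_add_right, inner_sum,
            inner_multiset_sum]
        have hneg : (∑ i, ⟪δ, β i⟫) + (t.map fun y => ⟪δ, y⟫).sum < 0 := by
          linarith
        by_cases hall : ∀ i, 0 ≤ ⟪δ, β i⟫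
        · -- find y in t with negative inner product, merge into the multiset
          obtain ⟨y, hyt, hy⟩ : ∃ y ∈ t, ⟪δ, y⟫ < 0 := by
            by_contra hcon
            push_neg at hcon
            have h1 : 0 ≤ (t.map fun y => ⟪δ, y⟫).sum :=
              Multiset.sum_nonneg (by
                intro x hx
                obtain ⟨y, hyt, rfl⟩ := Multiset.mem_map.1 hx
                exact hcon y hyt)
            have h2 : 0 ≤ ∑ i, ⟪δ, β i⟫ := Finset.sum_nonneg fun i _ => hall i
            linarith
          have hyR : y ∈ RS.Rpos := ht y hyt
          have hne : y + δ ≠ 0 := by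
            intro hc
            exact root_ne_zero RS hyR.1 (qplus_add_eq_zero RS hyR.2 hδ.2 hc)
          have hadd : y + δ ∈ RS.R :=
            add_root_of_inner_neg RS hyR.1 hδ.1 (by rwa [real_inner_comm]) hne
          have hts : y ::ₘ t.erase y = t := Multiset.cons_erase hyt
          refine IH ((y + δ) ::ₘ t.erase y) ?_ γ β hγ ?_ hβ hβa ?_
          · rw [Multiset.card_cons, Multiset.card_erase_of_mem hyt]
            have h0 : 0 < t.card := Multiset.card_pos.2 (by
              intro hc; rw [hc] at hyt; simp at hyt)
            have h1 := Nat.succ_pred_eq_of_pos h0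
            omega
          · intro z hz
            rcases Multiset.mem_cons.1 hz with rfl | hz
            · exact ⟨hadd, AddSubmonoid.add_mem _ hyR.2 hδ.2⟩
            · exact ht z (Multiset.mem_of_mem_erase hz)
          · rw [hsums] at hsum
            rw [hsum, Multiset.sum_cons]
            have : t.sum = y + (t.erase y).sum := by rw [← Multiset.sum_cons, hts]
            rw [this]; abel
        · -- merge δ into some β i
          push_neg at hall
          obtain ⟨i, hi⟩ := hall
          have hne : β i + δ ≠ 0 := by
            intro hc
            exact root_ne_zero RS (hβ i).1 (qplus_add_eq_zero RS (hβ i).2 hδ.2 hc)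
          have hadd : β i + δ ∈ RS.R :=
            add_root_of_inner_neg RS (hβ i).1 hδ.1 (by rwa [real_inner_comm]) hne
          set β' := Function.update β i (β i + δ) with hβ'def
          have hβ'eq : ∀ j, β' j = β j + (if j = i then δ else 0) := by
            intro j
            by_cases hj : j = i
            · subst hj; simp [hβ'def]
            · simp [hβ'def, Function.update_of_ne hj, hj]
          have hsum' : ∑ j, β' j = (∑ j, β j) + δ := by
            simp only [hβ'eq]
            rw [Finset.sum_add_distrib]
            congr 1
            simp
          refine IH t htcard γ β' hγ ht ?_ ?_ ?_
          · intro j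
            by_cases hj : j = i
            · subst hj
              rw [hβ'def, Function.update_self]
              exact ⟨hadd, AddSubmonoid.add_mem _ (hβ j).2 hδ.2⟩
            · rw [hβ'def, Function.update_of_ne hj]; exact hβ j
          · intro j
            by_cases hj : j = i
            · subst hj
              have : β' j - a j = (β j - a j) + δ := by
                rw [hβ'def, Function.update_self]; abel
              rw [this]
              exact AddSubmonoid.add_mem _ (hβa j) hδ.2
            · rw [hβ'def, Function.update_of_ne hj]; exact hβa j
          · rw [hsum', hsum, Multiset.sum_cons]
            abel

end StmtAux

/-- An antichain `A` generates an ideal of nilpotence `k` iff no sum of `k+1`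
(not necessarily distinct) elements of `A` is `≤ θ`. -/
theorem stmt_6 {n : ℕ} (RS : BasedRootSys n) (θ : EuclideanSpace ℝ (Fin n))
    (hθpos : θ ∈ RS.Rpos) (hθmax : ∀ α ∈ RS.R, RS.le α θ)
    (A : Set (EuclideanSpace ℝ (Fin n))) (hA : RS.IsJAntichain ∅ A) (k : ℕ) :
    (∀ f : Fin (k + 1) → EuclideanSpace ℝ (Fin n),
        (∀ p, f p ∈ RS.PhiOf A) → ∑ p, f p ∉ RS.R) ↔
    (∀ f : Fin (k + 1) → EuclideanSpace ℝ (Fin n),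
        (∀ p, f p ∈ A) → ¬ RS.le (∑ p, f p) θ) := by
  constructor
  · -- nilpotence → no sum of antichain elements ≤ θ
    intro h f hf hle
    obtain ⟨s, hs, hssum⟩ := StmtAux.exists_multiset_of_mem_Qplus RS hle
    obtain ⟨g, hg1, hg2, hg3⟩ :=
      StmtAux.main_lemma RS k f s.card s le_rfl θ f hθpos.1 hs
        (fun p => hA.1 (hf p))
        (fun p => by rw [sub_self]; exact AddSubmonoid.zero_mem _)
        (by rw [hssum]; abel)
    exact h g (fun p => ⟨hg1 p, f p, hf p, hg2 p⟩) hg3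
  · -- converse
    intro h f hf hsumR
    choose b hb hble using fun p => (hf p).2
    have h1 : θ - ∑ p, f p ∈ RS.Qplus := hθmax _ hsumR
    have h2 : ∑ p, (f p - b p) ∈ RS.Qplus :=
      AddSubmonoid.sum_mem _ (fun p _ => hble p)
    have h3 : θ - ∑ p, b p = (θ - ∑ p, f p) + ∑ p, (f p - b p) := by
      rw [Finset.sum_sub_distrib]; abel
    exact h b hb (show θ - ∑ p, b p ∈ RS.Qplus from h3 ▸ AddSubmonoid.add_mem _ h1 h2)
end
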